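/- With V, B, Q, Z, z₀ and 𝒞⁺_ρ as in the context, assume additionally that Q is negative definite on the kernel of Z (Q(v) < 0 for every nonzero v with Z(v) = 0). Then every w ∈ 𝒞⁺_ρ with Q(w) = 0 generates an extremal ray of 𝒞⁺_ρ: whenever w = w₁ + w₂ with w₁, w₂ ∈ 𝒞⁺_ρ, both w₁ and w₂ are positive scalar multiples of w. -/
import Mathlib


namespace BridgelandNotes

variable {V : Type*} [AddCommGroup V] [Module ℝ V]

/-- The cone `𝒞⁺_ρ = {w ∈ V : Z(w) ∈ ρ and Q(w) ≥ 0}`, where `ρ = {t·z₀ : t > 0}`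
is the open ray through `z₀` and `Q(w) = B(w, w)`. -/
def posCone (B : V →ₗ[ℝ] V →ₗ[ℝ] ℝ) (Z : V →ₗ[ℝ] ℂ) (z₀ : ℂ) : Set V :=
  {w | (∃ t : ℝ, 0 < t ∧ Z w = t • z₀) ∧ 0 ≤ B w w}

/-- If the quadratic form `Q(w) = B(w,w)` is negative definite on the kernel of `Z`,
then any `w ∈ 𝒞⁺_ρ` with `Q(w) = 0` generates an extremal ray of `𝒞⁺_ρ`: whenever
`w = w₁ + w₂` with `w₁, w₂ ∈ 𝒞⁺_ρ`, both `w₁` and `w₂` are positive scalar multiples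
of `w`. -/
theorem posCone_extremal_ray (B : V →ₗ[ℝ] V →ₗ[ℝ] ℝ)
    (hsymm : ∀ x y : V, B x y = B y x)
    (Z : V →ₗ[ℝ] ℂ) (hker : ∀ v : V, v ≠ 0 → Z v = 0 → B v v < 0)
    (z₀ : ℂ) (hz₀ : z₀ ≠ 0)
    (w : V) (hw : w ∈ posCone B Z z₀) (hQ : B w w = 0)
    (w₁ w₂ : V) (h₁ : w₁ ∈ posCone B Z z₀) (h₂ : w₂ ∈ posCone B Z z₀)
    (hsum : w = w₁ + w₂) :
    (∃ t : ℝ, 0 < t ∧ w₁ = t • w) ∧ (∃ t : ℝ, 0 < t ∧ w₂ = t • w) := by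
  obtain ⟨⟨t₁, ht₁, hZ₁⟩, hq₁⟩ := h₁
  obtain ⟨⟨t₂, ht₂, hZ₂⟩, hq₂⟩ := h₂
  -- expand Q(w) = 0
  have hb : B w₁ w₁ + 2 * B w₁ w₂ + B w₂ w₂ = 0 := by
    have := hQ
    rw [hsum] at this
    simp only [map_add, LinearMap.add_apply] at this
    rw [hsymm w₂ w₁] at this
    linarith
  -- the auxiliary vector
  set u : V := t₂ • w₁ - t₁ • w₂ with hu
  have hZu : Z u = 0 := by
    simp only [hu, map_sub, map_smul, hZ₁, hZ₂, smul_smul]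
    rw [mul_comm]
    simp
  have hQu : 0 ≤ B u u := by
    have : B u u = t₂ ^ 2 * B w₁ w₁ - 2 * (t₁ * t₂) * B w₁ w₂ + t₁ ^ 2 * B w₂ w₂ := by
      simp only [hu, map_sub, map_smul, LinearMap.sub_apply, LinearMap.smul_apply,
        smul_eq_mul]
      rw [hsymm w₂ w₁]
      ring
    rw [this]
    nlinarith [mul_pos ht₁ ht₂, sq_nonneg t₁, sq_nonneg t₂]
  have hu0 : u = 0 := by
    by_contra h
    exact absurd hQu (not_le.mpr (hker u h hZu))
  have hrel : t₂ • w₁ = t₁ • w₂ := by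
    have := sub_eq_zero.mp hu0
    exact this
  have hts : (0:ℝ) < t₁ + t₂ := by linarith
  constructor
  · refine ⟨t₁ / (t₁ + t₂), div_pos ht₁ hts, ?_⟩
    have h3 : (t₁ + t₂) • w₁ = t₁ • (w₁ + w₂) := by
      rw [add_smul, smul_add, hrel]
    have h4 := congrArg (fun x => (t₁ + t₂)⁻¹ • x) h3
    simp only [smul_smul, inv_mul_cancel₀ hts.ne', one_smul] at h4
    rw [hsum, div_eq_inv_mul]
    exact h4
  · refine ⟨t₂ / (t₁ + t₂), div_pos ht₂ hts, ?_⟩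
    have h3 : (t₁ + t₂) • w₂ = t₂ • (w₁ + w₂) := by
      rw [add_smul, smul_add, hrel]
    have h4 := congrArg (fun x => (t₁ + t₂)⁻¹ • x) h3
    simp only [smul_smul, inv_mul_cancel₀ hts.ne', one_smul] at h4
    rw [hsum, div_eq_inv_mul]
    exact h4

end BridgelandNotes
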